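/- Let E be a real Banach space and K a subset of its topological dual E′. Suppose that for each R > 0 there exists a convex, weak*-closed set L_R ⊆ E′ such that K ∩ B̄_R ⊆ L_R ⊆ K, where B̄_R is the closed ball of radius R centered at the origin of E′. Then K is convex and weak*-closed (i.e. regularly convex). -/

import Mathlib

open Metric Set Filter

noncomputable section KS18aux

variable {ι : Type*} [TopologicalSpace ι] [DiscreteTopology ι] [DecidableEq ι]

/-- coordinate "basis vector" in `C₀(ι, ℝ)` -/
def ks18single (i : ι) : ZeroAtInftyContinuousMap ι ℝ :=
  { toFun := fun j => if j = i then (1 : ℝ) else 0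
    continuous_toFun := continuous_of_discreteTopology
    zero_at_infty' := by
      rw [cocompact_eq_cofinite]
      refine tendsto_const_nhds.congr' ?_
      have : ∀ᶠ j in cofinite, j ≠ i := (Set.finite_singleton i).eventually_cofinite_notMem.mono
        (by simp)
      filter_upwards [this] with j hj
      simp [hj] }

theorem ks18single_apply (i j : ι) : ks18single i j = if j = i then (1:ℝ) else 0 := rfl

/-- norm bound for C₀ functions -/
theorem ks18norm_le {g : ZeroAtInftyContinuousMap ι ℝ} {c : ℝ} (hc : 0 ≤ c)
    (h : ∀ j, |g j| ≤ c) : ‖g‖ ≤ c := by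
  rw [← ZeroAtInftyContinuousMap.norm_toBCF_eq_norm]
  exact (BoundedContinuousFunction.norm_le hc).2 h

theorem ks18coord_le_norm (g : ZeroAtInftyContinuousMap ι ℝ) (j : ι) : |g j| ≤ ‖g‖ := by
  rw [← ZeroAtInftyContinuousMap.norm_toBCF_eq_norm]
  exact BoundedContinuousFunction.norm_coe_le_norm g.toBCF j

/-- evaluation as an AddMonoidHom -/
def ks18ev (j : ι) : ZeroAtInftyContinuousMap ι ℝ →+ ℝ :=
  AddMonoidHom.mk' (fun g => g j) (fun a b => rfl)

theorem ks18sum_apply (s : Finset ι) (c : ι → ℝ) (j : ι) :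
    (∑ i ∈ s, c i • ks18single i) j = if j ∈ s then c j else 0 := by
  have h1 : (ks18ev j) (∑ i ∈ s, c i • ks18single i)
      = ∑ i ∈ s, (ks18ev j) (c i • ks18single i) := map_sum _ _ _
  simp only [ks18ev, AddMonoidHom.mk'_apply] at h1
  rw [h1]
  have : ∀ i, (c i • ks18single i) j = if j = i then c i else 0 := by
    intro i
    by_cases h : j = i
    · subst h; simp [ZeroAtInftyContinuousMap.coe_smul, ks18single_apply]
    · simp [ZeroAtInftyContinuousMap.coe_smul, ks18single_apply, h]
  simp only [this]
  exact Finset.sum_ite_eq s j c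

theorem ks18hasSum (g : ZeroAtInftyContinuousMap ι ℝ) :
    HasSum (fun i => g i • ks18single i) g := by
  rw [HasSum]
  rw [Metric.tendsto_nhds]
  intro ε hε
  have hcof : ∀ᶠ j in cofinite, |g j| < ε / 2 := by
    have := g.zero_at_infty'
    rw [cocompact_eq_cofinite] at this
    have := Metric.tendsto_nhds.1 this (ε/2) (by linarith)
    simpa [Real.dist_eq] using this
  rw [Filter.eventually_cofinite] at hcof
  rw [SummationFilter.unconditional_filter, Filter.eventually_atTop]
  refine ⟨hcof.toFinset, fun s hs => ?_⟩
  rw [dist_eq_norm]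
  have hev : ∀ j, (∑ i ∈ s, g i • ks18single i) j = if j ∈ s then g j else 0 :=
    fun j => ks18sum_apply s (fun i => g i) j
  have : ‖(∑ i ∈ s, g i • ks18single i) - g‖ ≤ ε / 2 := by
    apply ks18norm_le (by linarith)
    intro j
    have : ((∑ i ∈ s, g i • ks18single i) - g) j = (if j ∈ s then g j else 0) - g j := by
      rw [ZeroAtInftyContinuousMap.coe_sub]; simp [hev j]
    rw [this]
    by_cases h : j ∈ s
    · simp [h]; linarith
    · have hj : j ∉ hcof.toFinset := fun hc => h (hs hc)
      rw [Set.Finite.mem_toFinset] at hj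
      simp only [Set.mem_setOf_eq, not_not] at hj
      simp only [h, if_neg]
      simpa using le_of_lt hj
  linarith

/-- Separation lemma in `c₀`. -/
theorem ks18sep (t : Set (ZeroAtInftyContinuousMap ι ℝ)) (ht : Convex ℝ t)
    (h1 : ∀ g ∈ t, ∃ i, 1 < |g i|) :
    ∃ (α : ι → ℝ) (u : ℝ), 0 < u ∧ Summable (fun i => |α i|) ∧
      ∀ g ∈ t, ∃ v : ℝ, HasSum (fun i => α i * g i) v ∧ u ≤ v := by
  have hdisj : Disjoint (Metric.ball (0 : ZeroAtInftyContinuousMap ι ℝ) 1) t := by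
    rw [Set.disjoint_left]
    intro g hg hgt
    obtain ⟨i, hi⟩ := h1 g hgt
    have h2 := ks18coord_le_norm g i
    have h3 : ‖g‖ < 1 := by simpa [dist_zero_right] using hg
    linarith
  obtain ⟨f, u, hfu, hft⟩ :=
    geometric_hahn_banach_open (convex_ball (0 : ZeroAtInftyContinuousMap ι ℝ) 1)
      Metric.isOpen_ball ht hdisj
  have hu : 0 < u := by
    have := hfu 0 (Metric.mem_ball_self one_pos)
    simpa using this
  set α : ι → ℝ := fun i => f (ks18single i) with hα
  have hsum : ∀ s : Finset ι, ∑ i ∈ s, |α i| ≤ ‖f‖ := by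
    intro s
    set σ : ι → ℝ := fun i => if 0 ≤ α i then 1 else -1 with hσ
    have habs : ∀ i, |α i| = σ i * α i := by
      intro i
      by_cases h : 0 ≤ α i
      · simp [hσ, h, abs_of_nonneg]
      · simp [hσ, h, abs_of_neg (lt_of_not_ge h)]
    set g : ZeroAtInftyContinuousMap ι ℝ := ∑ i ∈ s, σ i • ks18single i with hg
    have hgnorm : ‖g‖ ≤ 1 := by
      apply ks18norm_le zero_le_one
      intro j
      rw [hg, ks18sum_apply]
      by_cases h : j ∈ s
      · simp only [h, if_pos]
        by_cases h2 : 0 ≤ α j <;> simp [hσ, h2]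
      · simp [h]
    have hfg : f g = ∑ i ∈ s, |α i| := by
      rw [hg, map_sum]
      refine Finset.sum_congr rfl fun i _ => ?_
      rw [f.map_smul, smul_eq_mul, habs i]
    calc ∑ i ∈ s, |α i| = f g := hfg.symm
      _ ≤ |f g| := le_abs_self _
      _ ≤ ‖f‖ * ‖g‖ := f.le_opNorm g
      _ ≤ ‖f‖ * 1 := by
          exact mul_le_mul_of_nonneg_left hgnorm (norm_nonneg f)
      _ = ‖f‖ := mul_one _
  refine ⟨α, u, hu, summable_of_sum_le (fun i => abs_nonneg _) hsum, fun g hg => ?_⟩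
  refine ⟨f g, ?_, hft g hg⟩
  have := (ks18hasSum g).mapL f
  have heq : ∀ i, f (g i • ks18single i) = α i * g i := by
    intro i
    rw [f.map_smul, smul_eq_mul, mul_comm]
  simpa [heq] using this

end KS18aux

open NormedSpace

noncomputable section KS18aux2

variable {E : Type*} [NormedAddCommGroup E] [NormedSpace ℝ E] [DecidableEq E]

-- Step A: closedness of C intersected with any ball (arbitrary center)
theorem ks18hclb {C : Set (WeakDual ℝ E)}
    (hcl : ∀ R : ℝ, 0 < R → IsClosed (C ∩ WeakDual.toStrongDual ⁻¹' Metric.closedBall 0 R))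
    (ψ₀ : WeakDual ℝ E) (ρ : ℝ) :
    IsClosed (C ∩ WeakDual.toStrongDual ⁻¹' closedBall (WeakDual.toStrongDual ψ₀) ρ) := by
  set N := (WeakDual.toStrongDual : WeakDual ℝ E ≃ₗ[ℝ] StrongDual ℝ E)
  have key : C ∩ N ⁻¹' closedBall (N ψ₀) ρ
      = (C ∩ N ⁻¹' closedBall 0 (|ρ| + ‖N ψ₀‖ + 1)) ∩ (N ⁻¹' closedBall (N ψ₀) ρ) := by
    apply Set.Subset.antisymm
    · rintro ψ ⟨hψC, hψB⟩
      refine ⟨⟨hψC, ?_⟩, hψB⟩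
      simp only [Set.mem_preimage, mem_closedBall, dist_zero_right] at *
      calc ‖N ψ‖ ≤ ‖N ψ - N ψ₀‖ + ‖N ψ₀‖ := by
            have := norm_sub_norm_le (N ψ) (N ψ₀); linarith [norm_sub_le (N ψ - N ψ₀) (- N ψ₀)]
        _ ≤ ρ + ‖N ψ₀‖ := by rw [← dist_eq_norm]; linarith [hψB]
        _ ≤ |ρ| + ‖N ψ₀‖ + 1 := by linarith [le_abs_self ρ]
    · rintro ψ ⟨⟨hψC, _⟩, hψB⟩
      exact ⟨hψC, hψB⟩
  rw [key]
  exact (hcl _ (by positivity)).inter (WeakDual.isClosed_closedBall _ _)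

-- Polar-type sets are closed
theorem ks18polClosed (ψ₀ : WeakDual ℝ E) (S : Finset E) :
    IsClosed {ψ : WeakDual ℝ E | ∀ x ∈ S, |ψ x - ψ₀ x| ≤ 1} := by
  have : {ψ : WeakDual ℝ E | ∀ x ∈ S, |ψ x - ψ₀ x| ≤ 1}
      = ⋂ x ∈ (S : Set E), {ψ : WeakDual ℝ E | |ψ x - ψ₀ x| ≤ 1} := by
    ext ψ; simp
  rw [this]
  refine isClosed_biInter fun x _ => ?_
  have hcont : Continuous fun ψ : WeakDual ℝ E => |ψ x - ψ₀ x| :=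
    ((WeakDual.eval_continuous x).sub continuous_const).abs
  exact isClosed_Iic.preimage hcont

-- Step B : a ball around ψ₀ missing C
theorem ks18r {C : Set (WeakDual ℝ E)}
    (hcl : ∀ R : ℝ, 0 < R → IsClosed (C ∩ WeakDual.toStrongDual ⁻¹' Metric.closedBall 0 R))
    {ψ₀ : WeakDual ℝ E} (hψ₀ : ψ₀ ∉ C) :
    ∃ r : ℝ, 0 < r ∧
      C ∩ WeakDual.toStrongDual ⁻¹' closedBall (WeakDual.toStrongDual ψ₀) r = ∅ := by
  set N := (WeakDual.toStrongDual : WeakDual ℝ E ≃ₗ[ℝ] StrongDual ℝ E)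
  by_contra h
  push_neg at h
  have h' : ∀ n : ℕ, ∃ ψ, ψ ∈ C ∩ N ⁻¹' closedBall (N ψ₀) (1 / (n + 1)) := by
    intro n
    have := h (1 / (n + 1)) (by positivity)
    exact this
  choose u hu using h'
  have hdist : ∀ n : ℕ, dist (N (u n)) (N ψ₀) ≤ 1 / (n + 1) := fun n => (hu n).2
  have htend : Filter.Tendsto (fun n => N (u n)) Filter.atTop (nhds (N ψ₀)) := by
    rw [tendsto_iff_dist_tendsto_zero]
    refine squeeze_zero (fun n => dist_nonneg) hdist ?_
    exact tendsto_one_div_add_atTop_nhds_zero_nat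
  have htendW : Filter.Tendsto u Filter.atTop (nhds ψ₀) := by
    have hcont := (NormedSpace.Dual.toWeakDual_continuous (𝕜 := ℝ) (E := E)).tendsto (N ψ₀)
    have := hcont.comp htend
    exact this
  have hZ : IsClosed (C ∩ N ⁻¹' closedBall (N ψ₀) 1) := ks18hclb hcl ψ₀ 1
  have hmem : ∀ n, u n ∈ C ∩ N ⁻¹' closedBall (N ψ₀) 1 := by
    intro n
    refine ⟨(hu n).1, ?_⟩
    simp only [Set.mem_preimage, mem_closedBall]
    refine le_trans (hdist n) ?_
    rw [div_le_one (by positivity)]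
    linarith [Nat.cast_nonneg (α := ℝ) n]
  exact hψ₀ (hZ.mem_of_tendsto htendW (Filter.Eventually.of_forall hmem)).1

-- the key inductive step
theorem ks18step {C : Set (WeakDual ℝ E)}
    (hcl : ∀ R : ℝ, 0 < R → IsClosed (C ∩ WeakDual.toStrongDual ⁻¹' Metric.closedBall 0 R))
    (ψ₀ : WeakDual ℝ E) {r : ℝ} (hr : 0 < r) (n : ℕ) (S : Finset E)
    (hPS : C ∩ WeakDual.toStrongDual ⁻¹' closedBall (WeakDual.toStrongDual ψ₀) ((n + 1) * r)
      ∩ {ψ : WeakDual ℝ E | ∀ x ∈ S, |ψ x - ψ₀ x| ≤ 1} = ∅) :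
    ∃ F : Finset E, (∀ x ∈ F, ‖x‖ ≤ 1 / ((n + 1) * r)) ∧
      C ∩ WeakDual.toStrongDual ⁻¹' closedBall (WeakDual.toStrongDual ψ₀) ((n + 2) * r)
      ∩ {ψ : WeakDual ℝ E | ∀ x ∈ S ∪ F, |ψ x - ψ₀ x| ≤ 1} = ∅ := by
  set N := (WeakDual.toStrongDual : WeakDual ℝ E ≃ₗ[ℝ] StrongDual ℝ E)
  set δ : ℝ := 1 / ((n + 1) * r) with hδ
  have hδpos : 0 < δ := by positivity
  by_contra hcon
  push_neg at hcon
  have hne : ∀ F : Finset E, (∀ x ∈ F, ‖x‖ ≤ δ) →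
      ((C ∩ N ⁻¹' closedBall (N ψ₀) ((n + 2) * r))
        ∩ {ψ : WeakDual ℝ E | ∀ x ∈ S ∪ F, |ψ x - ψ₀ x| ≤ 1}).Nonempty := by
    intro F hF
    exact hcon F hF
  let ι' := {F : Finset E // ∀ x ∈ F, ‖x‖ ≤ δ}
  haveI : Nonempty ι' := ⟨⟨∅, fun x hx => absurd hx (Finset.notMem_empty x)⟩⟩
  set Z : ι' → Set (WeakDual ℝ E) := fun F =>
    (C ∩ N ⁻¹' closedBall (N ψ₀) ((n + 2) * r))
      ∩ {ψ : WeakDual ℝ E | ∀ x ∈ S ∪ F.1, |ψ x - ψ₀ x| ≤ 1} with hZ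
  have hZclosed : ∀ F, IsClosed (Z F) :=
    fun F => (ks18hclb hcl ψ₀ _).inter (ks18polClosed ψ₀ _)
  have hZcompact : ∀ F, IsCompact (Z F) := by
    intro F
    refine IsCompact.of_isClosed_subset (WeakDual.isCompact_closedBall (N ψ₀) ((n + 2) * r))
      (hZclosed F) ?_
    rintro ψ ⟨⟨_, h2⟩, _⟩
    exact h2
  have hZne : ∀ F, (Z F).Nonempty := fun F => hne F.1 F.2
  have hZdir : Directed (· ⊇ ·) Z := by
    intro F₁ F₂
    refine ⟨⟨F₁.1 ∪ F₂.1, fun x hx => ?_⟩, ?_, ?_⟩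
    · rcases Finset.mem_union.1 hx with h | h
      · exact F₁.2 x h
      · exact F₂.2 x h
    · rintro ψ ⟨h1, h2⟩
      refine ⟨h1, fun x hx => h2 x ?_⟩
      rcases Finset.mem_union.1 hx with h | h
      · exact Finset.mem_union_left _ h
      · exact Finset.mem_union_right _ (Finset.mem_union_left _ h)
    · rintro ψ ⟨h1, h2⟩
      refine ⟨h1, fun x hx => h2 x ?_⟩
      rcases Finset.mem_union.1 hx with h | h
      · exact Finset.mem_union_left _ h
      · exact Finset.mem_union_right _ (Finset.mem_union_right _ h)
  obtain ⟨ψ, hψ⟩ :=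
    IsCompact.nonempty_iInter_of_directed_nonempty_isCompact_isClosed Z hZdir hZne
      hZcompact hZclosed
  simp only [Set.mem_iInter] at hψ
  have hψC : ψ ∈ C := ((hψ ⟨∅, fun x hx => absurd hx (Finset.notMem_empty x)⟩).1).1
  have hψS : ∀ x ∈ S, |ψ x - ψ₀ x| ≤ 1 := by
    intro x hx
    exact (hψ ⟨∅, fun y hy => absurd hy (Finset.notMem_empty y)⟩).2 x
      (Finset.mem_union_left _ hx)
  have hψδ : ∀ x : E, ‖x‖ ≤ δ → |ψ x - ψ₀ x| ≤ 1 := by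
    intro x hx
    have := (hψ ⟨{x}, fun y hy => by rwa [Finset.mem_singleton.1 hy]⟩).2 x
      (Finset.mem_union_right _ (Finset.mem_singleton_self x))
    exact this
  -- norm bound  ‖N ψ - N ψ₀‖ ≤ (n+1) r
  have hg : ∀ x : E, (N ψ - N ψ₀) x = ψ x - ψ₀ x := fun x => rfl
  have hnorm : ‖N ψ - N ψ₀‖ ≤ (n + 1) * r := by
    refine ContinuousLinearMap.opNorm_le_bound _ (by positivity) fun x => ?_
    by_cases hx0 : x = 0
    · simp [hx0]
    · have hxpos : 0 < ‖x‖ := norm_pos_iff.2 hx0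
      set c : ℝ := δ / ‖x‖ with hc
      have hcpos : 0 < c := by positivity
      have hcx : ‖c • x‖ ≤ δ := by
        rw [norm_smul, Real.norm_eq_abs, abs_of_pos hcpos, hc, div_mul_cancel₀]
        exact ne_of_gt hxpos
      have h1 : |ψ (c • x) - ψ₀ (c • x)| ≤ 1 := hψδ _ hcx
      have h2 : ψ (c • x) - ψ₀ (c • x) = c * ((N ψ - N ψ₀) x) := by
        rw [← hg]
        rw [map_smul]
        simp
      rw [h2, abs_mul, abs_of_pos hcpos] at h1
      have h3 : |(N ψ - N ψ₀) x| ≤ 1 / c := by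
        rw [le_div_iff₀ hcpos, mul_comm]
        exact h1
      have h4 : 1 / c = (n + 1) * r * ‖x‖ := by
        rw [hc, hδ]
        field_simp
      calc ‖(N ψ - N ψ₀) x‖ = |(N ψ - N ψ₀) x| := rfl
        _ ≤ 1 / c := h3
        _ = (n + 1) * r * ‖x‖ := h4
  have hmem : ψ ∈ C ∩ N ⁻¹' closedBall (N ψ₀) ((n + 1) * r)
      ∩ {ψ : WeakDual ℝ E | ∀ x ∈ S, |ψ x - ψ₀ x| ≤ 1} := by
    refine ⟨⟨hψC, ?_⟩, hψS⟩
    simp only [Set.mem_preimage, mem_closedBall, dist_eq_norm]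
    exact hnorm
  rw [hPS] at hmem
  exact hmem

end KS18aux2


section KS18main

open NormedSpace

theorem ks18main {E : Type*} [NormedAddCommGroup E] [NormedSpace ℝ E] [CompleteSpace E]
    {C : Set (WeakDual ℝ E)} (hconv : Convex ℝ C)
    (hcl : ∀ R : ℝ, 0 < R → IsClosed (C ∩ WeakDual.toStrongDual ⁻¹' Metric.closedBall 0 R)) :
    IsClosed C := by
  classical
  rw [← isOpen_compl_iff, isOpen_iff_mem_nhds]
  intro ψ₀ hψ₀
  rw [Set.mem_compl_iff] at hψ₀
  set N := (WeakDual.toStrongDual : WeakDual ℝ E ≃ₗ[ℝ] StrongDual ℝ E) with hN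
  obtain ⟨r, hr, hrC⟩ := ks18r hcl hψ₀
  let P : ℕ → Finset E → Prop := fun n S =>
    C ∩ N ⁻¹' closedBall (N ψ₀) ((n + 1) * r)
      ∩ {ψ : WeakDual ℝ E | ∀ x ∈ S, |ψ x - ψ₀ x| ≤ 1} = ∅
  have base : P 0 ∅ := by
    show C ∩ N ⁻¹' closedBall (N ψ₀) (((0 : ℕ) + 1) * r) ∩ _ = ∅
    have h1 : {ψ : WeakDual ℝ E | ∀ x ∈ (∅ : Finset E), |ψ x - ψ₀ x| ≤ 1} = Set.univ := by
      ext ψ; simp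
    rw [h1, Set.inter_univ]
    have h2 : (((0 : ℕ) : ℝ) + 1) * r = r := by norm_num
    rw [h2]
    exact hrC
  have step : ∀ n (S : Finset E), P n S →
      ∃ F : Finset E, (∀ x ∈ F, ‖x‖ ≤ 1 / ((n + 1) * r)) ∧ P (n + 1) (S ∪ F) := by
    intro n S h
    obtain ⟨F, hF1, hF2⟩ := ks18step hcl ψ₀ hr n S h
    refine ⟨F, hF1, ?_⟩
    show C ∩ N ⁻¹' closedBall (N ψ₀) ((((n : ℕ) + 1 : ℕ) + 1) * r) ∩ _ = ∅
    have harith : ((((n : ℕ) + 1 : ℕ) : ℝ) + 1) * r = ((n : ℝ) + 2) * r := by push_cast; ring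
    rw [harith]
    exact hF2
  let G : ∀ n : ℕ, {S : Finset E // P n S} := fun n =>
    Nat.rec ⟨∅, base⟩
      (fun k ih => ⟨ih.1 ∪ (step k ih.1 ih.2).choose, (step k ih.1 ih.2).choose_spec.2⟩) n
  let S : ℕ → Finset E := fun n => (G n).1
  let F : ℕ → Finset E := fun n => (step n (G n).1 (G n).2).choose
  have hSP : ∀ n, P n (S n) := fun n => (G n).2
  have hFnorm : ∀ n, ∀ x ∈ F n, ‖x‖ ≤ 1 / ((n + 1) * r) :=
    fun n => (step n (G n).1 (G n).2).choose_spec.1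
  have hSsucc : ∀ n, S (n + 1) = S n ∪ F n := fun n => rfl
  have hS0 : S 0 = ∅ := rfl
  have hSF : ∀ n, ∀ x ∈ S n, ∃ k, x ∈ F k := by
    intro n
    induction n with
    | zero => intro x hx; rw [hS0] at hx; exact absurd hx (Finset.notMem_empty x)
    | succ k ih =>
        intro x hx
        rw [hSsucc] at hx
        rcases Finset.mem_union.1 hx with h | h
        · exact ih x h
        · exact ⟨k, h⟩
  -- index type
  let I := (n : ℕ) × {x : E // x ∈ F n}
  letI : TopologicalSpace I := ⊥
  haveI : DiscreteTopology I := ⟨rfl⟩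
  let xI : I → E := fun i => i.2.1
  have hxInorm : ∀ i : I, ‖xI i‖ ≤ 1 / ((i.1 + 1) * r) := fun i => hFnorm i.1 i.2.1 i.2.2
  have hfin : ∀ Nb : ℕ, Set.Finite {i : I | i.1 ≤ Nb} := by
    intro Nb
    apply Set.Finite.ofFinset ((Finset.range (Nb + 1)).sigma fun n => (F n).attach)
    intro i
    simp [Finset.mem_sigma, Finset.mem_range, Nat.lt_succ_iff]
    exact Iff.rfl
  have hT : ∀ ψ : WeakDual ℝ E,
      Filter.Tendsto (fun i : I => ψ (xI i) - ψ₀ (xI i)) (Filter.cocompact I) (nhds 0) := by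
    intro ψ
    rw [cocompact_eq_cofinite, Metric.tendsto_nhds]
    intro ε hε
    rw [Filter.eventually_cofinite]
    set M := ‖N ψ - N ψ₀‖ with hM
    obtain ⟨Nb, hNb⟩ := exists_nat_ge (M / (r * ε))
    apply Set.Finite.subset (hfin Nb)
    intro i hi
    simp only [Set.mem_setOf_eq, Real.dist_eq, sub_zero, not_lt] at hi
    have hb : |ψ (xI i) - ψ₀ (xI i)| ≤ M * ‖xI i‖ := (N ψ - N ψ₀).le_opNorm (xI i)
    have hMnn : 0 ≤ M := norm_nonneg _
    have h2 : ε ≤ M * (1 / ((i.1 + 1) * r)) :=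
      le_trans hi (le_trans hb (mul_le_mul_of_nonneg_left (hxInorm i) hMnn))
    have hpos : (0:ℝ) < (i.1 + 1) * r := by positivity
    have h3 : ((i.1 : ℝ) + 1) * r * ε ≤ M := by
      rw [mul_one_div] at h2
      have := (le_div_iff₀ hpos).1 h2
      nlinarith [this]
    have h4 : (i.1 : ℝ) ≤ M / (r * ε) := by
      rw [le_div_iff₀ (by positivity)]
      nlinarith [hr, hε]
    have h5 : (i.1 : ℝ) ≤ (Nb : ℝ) := le_trans h4 hNb
    exact_mod_cast h5
  let T : WeakDual ℝ E → ZeroAtInftyContinuousMap I ℝ := fun ψ =>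
    { toFun := fun i => ψ (xI i) - ψ₀ (xI i)
      continuous_toFun := continuous_of_discreteTopology
      zero_at_infty' := hT ψ }
  have hTapp : ∀ ψ (i : I), T ψ i = ψ (xI i) - ψ₀ (xI i) := fun ψ i => rfl
  let t : Set (ZeroAtInftyContinuousMap I ℝ) := T '' C
  have htconv : Convex ℝ t := by
    rintro g₁ ⟨ψ₁, hψ₁, rfl⟩ g₂ ⟨ψ₂, hψ₂, rfl⟩ a b ha hb hab
    refine ⟨a • ψ₁ + b • ψ₂, hconv hψ₁ hψ₂ ha hb hab, ?_⟩
    ext i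
    have h1 : T (a • ψ₁ + b • ψ₂) i = a * ψ₁ (xI i) + b * ψ₂ (xI i) - ψ₀ (xI i) := rfl
    have h2 : (a • T ψ₁ + b • T ψ₂) i
        = a * (ψ₁ (xI i) - ψ₀ (xI i)) + b * (ψ₂ (xI i) - ψ₀ (xI i)) := rfl
    rw [h1, h2]
    linear_combination (ψ₀ (xI i)) * hab
  have ht1 : ∀ g ∈ t, ∃ i, 1 < |g i| := by
    rintro g ⟨ψ, hψ, rfl⟩
    obtain ⟨n, hn⟩ := exists_nat_ge (‖N ψ - N ψ₀‖ / r)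
    have hball : ψ ∈ N ⁻¹' closedBall (N ψ₀) ((n + 1) * r) := by
      simp only [Set.mem_preimage, mem_closedBall, dist_eq_norm]
      rw [div_le_iff₀ hr] at hn
      nlinarith [hr]
    have hnot : ¬ ∀ x ∈ S n, |ψ x - ψ₀ x| ≤ 1 := by
      intro hmem
      have hx : ψ ∈ C ∩ N ⁻¹' closedBall (N ψ₀) ((n + 1) * r)
          ∩ {ψ : WeakDual ℝ E | ∀ x ∈ S n, |ψ x - ψ₀ x| ≤ 1} := ⟨⟨hψ, hball⟩, hmem⟩
      rw [hSP n] at hx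
      exact hx
    push_neg at hnot
    obtain ⟨x, hxS, hx1⟩ := hnot
    obtain ⟨k, hk⟩ := hSF n x hxS
    exact ⟨⟨k, ⟨x, hk⟩⟩, hx1⟩
  obtain ⟨α, u, hu, hαsum, hval⟩ := ks18sep t htconv ht1
  have hsumx : Summable (fun i : I => α i • xI i) := by
    apply Summable.of_norm
    have hb : ∀ i : I, ‖α i • xI i‖ ≤ |α i| * (1 / r) := by
      intro i
      rw [norm_smul, Real.norm_eq_abs]
      refine mul_le_mul_of_nonneg_left (le_trans (hxInorm i) ?_) (abs_nonneg _)
      apply one_div_le_one_div_of_le hr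
      nlinarith [Nat.cast_nonneg (α := ℝ) i.1, hr]
    exact Summable.of_nonneg_of_le (fun i => norm_nonneg _) hb (hαsum.mul_right (1 / r))
  set x₀ : E := ∑' i, α i • xI i with hx₀def
  have hhx₀ : HasSum (fun i => α i • xI i) x₀ := hsumx.hasSum
  have hsep : ∀ ψ ∈ C, u ≤ ψ x₀ - ψ₀ x₀ := by
    intro ψ hψ
    obtain ⟨v, hv, huv⟩ := hval (T ψ) ⟨ψ, hψ, rfl⟩
    have hvs : HasSum (fun i => α i * (T ψ) i) ((N ψ - N ψ₀) x₀) := by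
      have h1 := hhx₀.mapL (N ψ - N ψ₀)
      have h2 : (fun i => (N ψ - N ψ₀) (α i • xI i)) = fun i => α i * (T ψ) i := by
        funext i
        rw [map_smul, smul_eq_mul]
        rfl
      rw [h2] at h1
      exact h1
    have hveq : v = (N ψ - N ψ₀) x₀ := hv.unique hvs
    have hfin : (N ψ - N ψ₀) x₀ = ψ x₀ - ψ₀ x₀ := rfl
    rw [hveq, hfin] at huv
    exact huv
  have hopen : IsOpen {ψ : WeakDual ℝ E | ψ x₀ - ψ₀ x₀ < u} := by
    have hcont : Continuous fun ψ : WeakDual ℝ E => ψ x₀ - ψ₀ x₀ :=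
      (WeakDual.eval_continuous x₀).sub continuous_const
    exact isOpen_Iio.preimage hcont
  have hmem₀ : ψ₀ ∈ {ψ : WeakDual ℝ E | ψ x₀ - ψ₀ x₀ < u} := by
    simp only [Set.mem_setOf_eq, sub_self]
    exact hu
  refine Filter.mem_of_superset (hopen.mem_nhds hmem₀) ?_
  intro ψ hψ hψC
  exact absurd (hsep ψ hψC) (not_le.2 hψ)

end KS18main

theorem stmt18
    (E : Type*) [NormedAddCommGroup E] [NormedSpace ℝ E] [CompleteSpace E]
    (K : Set (StrongDual ℝ E))
    (hK : ∀ R : ℝ, 0 < R → ∃ L : Set (StrongDual ℝ E),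
      Convex ℝ L ∧
      IsClosed ((fun φ : StrongDual ℝ E => StrongDual.toWeakDual φ) '' L :
        Set (WeakDual ℝ E)) ∧
      K ∩ Metric.closedBall 0 R ⊆ L ∧ L ⊆ K) :
    Convex ℝ K ∧
    IsClosed ((fun φ : StrongDual ℝ E => StrongDual.toWeakDual φ) '' K :
      Set (WeakDual ℝ E)) := by
  have hKconv : Convex ℝ K := by
    intro x hx y hy a b ha hb hab
    set R : ℝ := max ‖x‖ ‖y‖ + 1 with hR
    have hRpos : 0 < R := by positivity
    obtain ⟨L, hLconv, _, hKL, hLK⟩ := hK R hRpos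
    have hxL : x ∈ L := hKL ⟨hx, by
      simp only [mem_closedBall, dist_zero_right]
      have := le_max_left ‖x‖ ‖y‖; linarith⟩
    have hyL : y ∈ L := hKL ⟨hy, by
      simp only [mem_closedBall, dist_zero_right]
      have := le_max_right ‖x‖ ‖y‖; linarith⟩
    exact hLK (hLconv hxL hyL ha hb hab)
  refine ⟨hKconv, ?_⟩
  apply ks18main (C := (fun φ : StrongDual ℝ E => StrongDual.toWeakDual φ) '' K)
  · have heq : (fun φ : StrongDual ℝ E => (StrongDual.toWeakDual φ : WeakDual ℝ E))
        = ⇑(StrongDual.toWeakDual (𝕜 := ℝ) (E := E)).toLinearMap := rfl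
    rw [heq]
    exact hKconv.linear_image _
  · intro R hR
    obtain ⟨L, _, hLclosed, hKL, hLK⟩ := hK R hR
    have hset : ((fun φ : StrongDual ℝ E => StrongDual.toWeakDual φ) '' K)
        ∩ WeakDual.toStrongDual ⁻¹' closedBall 0 R
        = ((fun φ : StrongDual ℝ E => StrongDual.toWeakDual φ) '' L)
          ∩ WeakDual.toStrongDual ⁻¹' closedBall 0 R := by
      apply Set.Subset.antisymm
      · rintro ψ ⟨⟨φ, hφK, rfl⟩, hψB⟩
        have hφB : φ ∈ closedBall (0 : StrongDual ℝ E) R := hψB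
        exact ⟨⟨φ, hKL ⟨hφK, hφB⟩, rfl⟩, hψB⟩
      · rintro ψ ⟨⟨φ, hφL, rfl⟩, hψB⟩
        exact ⟨⟨φ, hLK hφL, rfl⟩, hψB⟩
    rw [hset]
    exact hLclosed.inter (WeakDual.isClosed_closedBall 0 R)
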